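/- Let r > 1 and let p, q be coprime positive integers with p < q. Then there exists m_*(r) > 0 such that for every m with 0 < m < min{1, m_*(r)} there exist real numbers 0 < c_min < c_max such that for every c ∈ (c_min, c_max) there is a function φ : ℤ → ℝ satisfying: φ_i = 1 for all i ≤ 0; φ_i > 0 for all i ∈ ℤ; φ_i → 0 as i → +∞; and (G^{(q)} φ)_i = φ_{i-p} for all i ∈ ℤ. In other words, φ is a positive traveling front solution of speed p/q, i.e. a fixed point of the map S^{(p)} ∘ G^{(q)}. -/

import Mathlib

open Filter

/-- The piecewise linear reproduction function `g(u) = r u` for `u < c`, `g(u) = 1` for `u ≥ c`. -/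
noncomputable def g (r c u : ℝ) : ℝ := if u < c then r * u else 1

/-- The generational map `G`: migration followed by reproduction. -/
noncomputable def G (r c m : ℝ) (u : ℤ → ℝ) : ℤ → ℝ :=
  fun i => g r c (m / 2 * u (i - 1) + (1 - m) * u i + m / 2 * u (i + 1))

namespace TW

variable (p q : ℕ)

/-- `us s` : the residue `(-s p) mod q`, drives the crossing pattern. -/
def us (s : ℤ) : ℤ := (-(s * (p:ℤ))) % (q:ℤ)

/-- `kk s = ⌈ s p / q ⌉` : position of the plateau edge at time `s`. -/
def kk (s : ℤ) : ℤ := -((-(s * (p:ℤ))) / (q:ℤ))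

variable {p q}

lemma us_nonneg (hq : 0 < q) (s : ℤ) : 0 ≤ us p q s :=
  Int.emod_nonneg _ (by exact_mod_cast hq.ne')

lemma us_lt (hq : 0 < q) (s : ℤ) : us p q s < q :=
  Int.emod_lt_of_pos _ (by exact_mod_cast hq)

lemma kk_eq (s : ℤ) : (q:ℤ) * kk p q s = s * p + us p q s := by
  have h := Int.mul_ediv_add_emod (-(s * (p:ℤ))) (q:ℤ)
  have h2 : (q:ℤ) * kk p q s = -((q:ℤ) * ((-(s * (p:ℤ))) / (q:ℤ))) := by
    unfold kk; ring
  unfold us; linarith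

lemma us_succ (hq : 0 < q) (hpq : p < q) (s : ℤ) :
    us p q (s+1) = us p q s - p + (if us p q s < p then (q:ℤ) else 0) := by
  have h1 : us p q s % (q:ℤ) = us p q s := Int.emod_emod_of_dvd _ dvd_rfl
  have key : us p q (s+1) = (us p q s - p) % q := by
    unfold us
    rw [show -((s+1) * (p:ℤ)) = (-(s * (p:ℤ))) - p by ring, Int.sub_emod]
    conv_rhs => rw [Int.sub_emod]
    unfold us at h1
    rw [h1]
  rw [key]
  have h0 := us_nonneg (p := p) hq s
  have h2 := us_lt (p := p) hq s
  have hq' : (0:ℤ) < q := by exact_mod_cast hq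
  by_cases hc : us p q s < (p:ℤ)
  · rw [if_pos hc]
    have hpq' : (p:ℤ) < q := by exact_mod_cast hpq
    have hpq' : (p:ℤ) < q := by exact_mod_cast hpq
    have e1 : (us p q s - p + q) % q = (us p q s - p) % q := by
      rw [show us p q s - p + q = us p q s - p + q * 1 by ring, Int.add_mul_emod_self_left]
    have e2 : (us p q s - p + q) % q = us p q s - p + q :=
      Int.emod_eq_of_lt (by omega) (by omega)
    omega
  · rw [if_neg hc]
    rw [Int.emod_eq_of_lt (by omega) (by omega)]
    ring

lemma kk_succ (hq : 0 < q) (hpq : p < q) (s : ℤ) :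
    kk p q (s+1) = kk p q s + (if us p q s < p then 1 else 0) := by
  have e1 := kk_eq (p := p) (q := q) s
  have e2 := kk_eq (p := p) (q := q) (s+1)
  have e3 := us_succ (p := p) hq hpq s
  have hq' : (q:ℤ) ≠ 0 := by exact_mod_cast hq.ne'
  by_cases hc : us p q s < (p:ℤ)
  · rw [if_pos hc]; rw [if_pos hc] at e3
    have : (q:ℤ) * kk p q (s+1) = (q:ℤ) * (kk p q s + 1) := by
      rw [e2, e3]; nlinarith [e1]
    exact mul_left_cancel₀ hq' this
  · rw [if_neg hc]; rw [if_neg hc] at e3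
    have : (q:ℤ) * kk p q (s+1) = (q:ℤ) * (kk p q s + 0) := by
      rw [e2, e3]; nlinarith [e1]
    exact mul_left_cancel₀ hq' this

lemma us_zero : us p q 0 = 0 := by unfold us; simp

lemma kk_zero : kk p q 0 = 0 := by unfold kk; simp

lemma us_add_q (s : ℤ) : us p q (s + q) = us p q s := by
  unfold us
  have : -((s + (q:ℤ)) * p) = -(s * (p:ℤ)) + (-(p:ℤ)) * q := by ring
  rw [this, Int.add_mul_emod_self_right]

lemma kk_add_q (hq : 0 < q) (s : ℤ) : kk p q (s + q) = kk p q s + p := by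
  have e1 := kk_eq (p := p) (q := q) s
  have e2 := kk_eq (p := p) (q := q) (s + q)
  have e3 := us_add_q (p := p) (q := q) s
  have hq' : (q:ℤ) ≠ 0 := by exact_mod_cast hq.ne'
  have : (q:ℤ) * kk p q (s + q) = (q:ℤ) * (kk p q s + p) := by
    rw [e2, e3]; ring_nf; ring_nf at e1; linarith
  exact mul_left_cancel₀ hq' this

lemma kk_mono (hq : 0 < q) (hpq : p < q) {s t : ℤ} (h : s ≤ t) : kk p q s ≤ kk p q t := by
  have key : ∀ n : ℕ, kk p q s ≤ kk p q (s + n) := by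
    intro n
    induction n with
    | zero => simp
    | succ k ih =>
      have : (s + (k+1:ℕ)) = (s + k) + 1 := by push_cast; ring
      rw [this, kk_succ hq hpq]
      split <;> omega
  have : t = s + ((t - s).toNat : ℤ) := by omega
  rw [this]; exact key _

/-- injectivity of `us` modulo `q` (needs coprimality). -/
lemma us_inj (hq : 0 < q) (hcop : Nat.Coprime p q) {s t : ℤ}
    (h : us p q s = us p q t) : (q:ℤ) ∣ (s - t) := by
  have e1 := kk_eq (p := p) (q := q) s
  have e2 := kk_eq (p := p) (q := q) t
  have hdvd : (q:ℤ) ∣ (s - t) * p := by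
    refine ⟨kk p q s - kk p q t, ?_⟩
    have : (s - t) * p = (s * p + us p q s) - (t * p + us p q t) := by rw [h]; ring
    rw [this, ← e1, ← e2]; ring
  have hcop' : IsCoprime (q:ℤ) (p:ℤ) := by
    rw [Int.isCoprime_iff_gcd_eq_one]
    simpa [Int.gcd, Nat.coprime_comm] using hcop.symm
  exact hcop'.dvd_of_dvd_mul_right hdvd

/-- existence of a time with a prescribed residue. -/
lemma us_surj (hq : 0 < q) (hcop : Nat.Coprime p q) (v : ℤ) (hv0 : 0 ≤ v) (hv : v < q) :
    ∃ s : ℤ, 0 ≤ s ∧ s < q ∧ us p q s = v := by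
  -- the map s ↦ us s on [0,q) is injective into [0,q), hence surjective
  classical
  have hinj : Set.InjOn (fun s => us p q s) (Set.Ico (0:ℤ) q) := by
    intro a ha b hb hab
    have := us_inj hq hcop hab
    obtain ⟨c, hc⟩ := this
    simp only [Set.mem_Ico] at ha hb
    have habz : a - b = 0 := by
      refine Int.eq_zero_of_abs_lt_dvd ⟨c, hc⟩ ?_
      rw [abs_lt]; constructor <;> omega
    omega
  have hmaps : Set.MapsTo (fun s => us p q s) (Set.Ico (0:ℤ) q) (Set.Ico (0:ℤ) q) := by
    intro a _; exact ⟨us_nonneg hq a, us_lt hq a⟩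
  have hfin : (Set.Ico (0:ℤ) q).Finite := Set.finite_Ico _ _
  have hsurj := Set.Finite.injOn_iff_bijOn_of_mapsTo hfin hmaps |>.1 hinj
  obtain ⟨s, hs, hus⟩ := hsurj.surjOn ⟨hv0, hv⟩
  exact ⟨s, (Set.mem_Ico.1 hs).1, (Set.mem_Ico.1 hs).2, hus⟩

-- join

/-- Hypothesis bundle: `η` is the steep characteristic root, `m` is small. -/
structure Good (r m : ℝ) (p q : ℕ) (η : ℝ) : Prop where
  hr : 1 < r
  hm0 : 0 < m
  hm23 : m ≤ 2/3
  hp : 0 < p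
  hpq : p < q
  heta : 2 ≤ η
  hid : r * (m/2 * η^(q:ℤ) + (1-m) + m/2 * η^(-(q:ℤ))) = η^(p:ℤ)
  hN3 : η^((p:ℤ) - q - 1) < r*m/2
  hN4 : m/2 + 2*η⁻¹ < 1 - m
  hrm : r*m ≤ 1

namespace Good

variable {r m : ℝ} {p q : ℕ} {η : ℝ}

lemma hq (h : Good r m p q η) : 0 < q := lt_trans h.hp h.hpq
lemma heta1 (h : Good r m p q η) : 1 < η := lt_of_lt_of_le one_lt_two h.heta
lemma heta0 (h : Good r m p q η) : 0 < η := lt_trans one_pos h.heta1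
lemma heta0' (h : Good r m p q η) : η ≠ 0 := ne_of_gt h.heta0
lemma hm1 (h : Good r m p q η) : m < 1 := lt_of_le_of_lt h.hm23 (by norm_num)
lemma hr0 (h : Good r m p q η) : 0 < r := lt_trans one_pos h.hr
lemma hmhalf (h : Good r m p q η) : 0 < m/2 := by linarith [h.hm0]
lemma h1m (h : Good r m p q η) : 0 < 1 - m := by linarith [h.hm1]

end Good

/-- Upper envelope. -/
noncomputable def Upp (p q : ℕ) (η : ℝ) (s i : ℤ) : ℝ :=
  if i ≤ kk p q s then 1 else η^((q:ℤ) - 1 + s*p - i*q)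

/-- Lower envelope. -/
noncomputable def Low (p q : ℕ) (η : ℝ) (s i : ℤ) : ℝ :=
  if i ≤ kk p q s then 1 else η^(s*(p:ℤ) - i*q)

/-- The approximating orbit: `Phi n s` is the profile at phase `s` of the orbit started
`n` steps in the past from the upper envelope. -/
noncomputable def Phi (r m : ℝ) (p q : ℕ) (η : ℝ) : ℕ → ℤ → ℤ → ℝ
  | 0 => fun s i => Upp p q η s i
  | (n+1) => fun s i => if i ≤ kk p q s then 1 else
      r*(m/2 * Phi r m p q η n (s-1) (i-1) + (1-m) * Phi r m p q η n (s-1) i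
         + m/2 * Phi r m p q η n (s-1) (i+1))

variable {r m : ℝ} {p q : ℕ} {η : ℝ}

lemma Phi_plateau (n : ℕ) (s i : ℤ) (hi : i ≤ kk p q s) : Phi r m p q η n s i = 1 := by
  cases n <;> simp [Phi, Upp, hi]

/-- the exponential step identity. -/
lemma step_E (h : Good r m p q η) (s i : ℤ) :
    r*(m/2 * η^(s*(p:ℤ) - (i-1)*q) + (1-m) * η^(s*(p:ℤ) - i*q) + m/2 * η^(s*(p:ℤ) - (i+1)*q))
      = η^((s+1)*(p:ℤ) - i*q) := by
  have h0 := h.heta0'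
  have e1 : s*(p:ℤ) - (i-1)*q = (s*(p:ℤ) - i*q) + q := by ring
  have e2 : s*(p:ℤ) - (i+1)*q = (s*(p:ℤ) - i*q) + (-(q:ℤ)) := by ring
  have e3 : (s+1)*(p:ℤ) - i*q = (s*(p:ℤ) - i*q) + p := by ring
  rw [e1, e2, e3, zpow_add₀ h0, zpow_add₀ h0, zpow_add₀ h0]
  have := h.hid
  nlinarith [this, zpow_pos h.heta0 (s*(p:ℤ) - i*q)]

lemma tail_expo (s i : ℤ) :
    (q:ℤ) - 1 + s*p - i*q = (q:ℤ) - 1 - us p q s - (i - kk p q s)*q := by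
  linear_combination - kk_eq (p := p) (q := q) s

lemma low_expo (s i : ℤ) :
    s*(p:ℤ) - i*q = - us p q s - (i - kk p q s)*q := by
  linear_combination - kk_eq (p := p) (q := q) s

/-- any function below `Upp s` is bounded by the pure exponential from `kk s` on. -/
lemma neighbor_le (h : Good r m p q η) (s : ℤ) (f : ℤ → ℝ)
    (hf : ∀ j', f j' ≤ Upp p q η s j') {j : ℤ} (hj : kk p q s ≤ j) :
    f j ≤ η^((q:ℤ) - 1 + s*p - j*q) := by
  rcases eq_or_lt_of_le hj with hj' | hj'
  · have h1 : f j ≤ 1 := by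
      have := hf j; rwa [Upp, if_pos hj'.symm.le] at this
    have h2 : (1:ℝ) ≤ η^((q:ℤ) - 1 + s*p - j*q) := by
      have hz : (0:ℤ) ≤ (q:ℤ) - 1 + s*p - j*q := by
        rw [tail_expo, ← hj']
        have := us_lt (p := p) h.hq s
        omega
      calc (1:ℝ) = η^(0:ℤ) := by norm_num
      _ ≤ _ := zpow_le_zpow_right₀ h.heta1.le hz
    linarith
  · refine le_trans (hf j) ?_
    rw [Upp, if_neg (by omega)]

lemma neighbor_ge (h : Good r m p q η) (s : ℤ) (f : ℤ → ℝ)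
    (hf : ∀ j', Low p q η s j' ≤ f j') {j : ℤ} (hj : kk p q s ≤ j) :
    η^(s*(p:ℤ) - j*q) ≤ f j := by
  rcases eq_or_lt_of_le hj with hj' | hj'
  · have h1 : (1:ℝ) ≤ f j := by
      have := hf j; rwa [Low, if_pos hj'.symm.le] at this
    have h2 : η^(s*(p:ℤ) - j*q) ≤ 1 := by
      have hz : s*(p:ℤ) - j*q ≤ 0 := by
        rw [low_expo, ← hj']
        have := us_nonneg (p := p) h.hq s
        omega
      calc η^(s*(p:ℤ) - j*q) ≤ η^(0:ℤ) := zpow_le_zpow_right₀ h.heta1.le hz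
      _ = 1 := by norm_num
    linarith
  · refine le_trans ?_ (hf j)
    rw [Low, if_neg (by omega)]

-- join2
variable {r m : ℝ} {p q : ℕ} {η : ℝ}

lemma Upp_le_one (h : Good r m p q η) (s i : ℤ) : Upp p q η s i ≤ 1 := by
  rw [Upp]; split_ifs with hi
  · exact le_rfl
  · have hz : (q:ℤ) - 1 + s*p - i*q ≤ 0 := by
      rw [tail_expo]
      have h1 := us_nonneg (p := p) h.hq s
      have h2 : kk p q s + 1 ≤ i := by omega
      have h3 : 1*(q:ℤ) ≤ (i - kk p q s)*q := by
        apply mul_le_mul_of_nonneg_right (by omega) (by positivity)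
      omega
    calc η^((q:ℤ) - 1 + s*p - i*q) ≤ η^(0:ℤ) := zpow_le_zpow_right₀ h.heta1.le hz
    _ = 1 := by norm_num

lemma Phi_tail (n : ℕ) (s i : ℤ) (hi : kk p q s + 1 ≤ i) :
    Phi r m p q η (n+1) s i =
      r*(m/2 * Phi r m p q η n (s-1) (i-1) + (1-m) * Phi r m p q η n (s-1) i
         + m/2 * Phi r m p q η n (s-1) (i+1)) := by
  show (if i ≤ kk p q s then (1:ℝ) else _) = _
  rw [if_neg (by omega)]

/-- one affine step stays below the upper envelope. -/
lemma conv_le (h : Good r m p q η) (s i : ℤ) (hi : kk p q (s+1) + 1 ≤ i) (f : ℤ → ℝ)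
    (hf : ∀ j', f j' ≤ Upp p q η s j') :
    r*(m/2 * f (i-1) + (1-m) * f i + m/2 * f (i+1)) ≤ η^((q:ℤ)-1+(s+1)*p - i*q) := by
  have hks : kk p q s ≤ kk p q (s+1) := kk_mono h.hq h.hpq (by omega)
  have b1 := neighbor_le h s f hf (j := i-1) (by omega)
  have b2 := neighbor_le h s f hf (j := i) (by omega)
  have b3 := neighbor_le h s f hf (j := i+1) (by omega)
  have h0 := h.heta0'
  have key := step_E h s i
  have hsplit : ∀ j : ℤ, ((q:ℤ)-1+s*p - j*q) = ((q:ℤ)-1) + (s*p - j*q) := by intro j; ring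
  have hsplit2 : ((q:ℤ)-1+(s+1)*p - i*q) = ((q:ℤ)-1) + ((s+1)*p - i*q) := by ring
  have hm2 : (0:ℝ) ≤ m/2 := by linarith [h.hm0]
  have h1m : (0:ℝ) ≤ 1 - m := by linarith [h.hm1]
  have hr0 : (0:ℝ) ≤ r := h.hr0.le
  calc r*(m/2 * f (i-1) + (1-m) * f i + m/2 * f (i+1))
      ≤ r*(m/2 * η^((q:ℤ)-1+s*p-(i-1)*q) + (1-m) * η^((q:ℤ)-1+s*p-i*q)
          + m/2 * η^((q:ℤ)-1+s*p-(i+1)*q)) := by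
        apply mul_le_mul_of_nonneg_left _ hr0
        have t1 := mul_le_mul_of_nonneg_left b1 hm2
        have t2 := mul_le_mul_of_nonneg_left b2 h1m
        have t3 := mul_le_mul_of_nonneg_left b3 hm2
        linarith
    _ = η^((q:ℤ)-1) * (r*(m/2 * η^(s*(p:ℤ)-(i-1)*q) + (1-m) * η^(s*(p:ℤ)-i*q)
          + m/2 * η^(s*(p:ℤ)-(i+1)*q))) := by
        rw [hsplit (i-1), hsplit i, hsplit (i+1), zpow_add₀ h0, zpow_add₀ h0, zpow_add₀ h0]
        ring
    _ = η^((q:ℤ)-1) * η^((s+1)*(p:ℤ) - i*q) := by rw [key]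
    _ = η^((q:ℤ)-1+(s+1)*p - i*q) := by rw [hsplit2, zpow_add₀ h0]

/-- one affine step stays above the lower envelope. -/
lemma conv_ge (h : Good r m p q η) (s i : ℤ) (hi : kk p q (s+1) + 1 ≤ i) (f : ℤ → ℝ)
    (hf : ∀ j', Low p q η s j' ≤ f j') :
    η^((s+1)*(p:ℤ) - i*q) ≤ r*(m/2 * f (i-1) + (1-m) * f i + m/2 * f (i+1)) := by
  have hks : kk p q s ≤ kk p q (s+1) := kk_mono h.hq h.hpq (by omega)
  have b1 := neighbor_ge h s f hf (j := i-1) (by omega)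
  have b2 := neighbor_ge h s f hf (j := i) (by omega)
  have b3 := neighbor_ge h s f hf (j := i+1) (by omega)
  have key := step_E h s i
  have hm2 : (0:ℝ) ≤ m/2 := by linarith [h.hm0]
  have h1m : (0:ℝ) ≤ 1 - m := by linarith [h.hm1]
  have hr0 : (0:ℝ) ≤ r := h.hr0.le
  rw [← key]
  apply mul_le_mul_of_nonneg_left _ hr0
  have t1 := mul_le_mul_of_nonneg_left b1 hm2
  have t2 := mul_le_mul_of_nonneg_left b2 h1m
  have t3 := mul_le_mul_of_nonneg_left b3 hm2
  linarith

lemma Phi_le_Upp (h : Good r m p q η) : ∀ (n : ℕ) (s i : ℤ),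
    Phi r m p q η n s i ≤ Upp p q η s i := by
  intro n
  induction n with
  | zero => intro s i; exact le_rfl
  | succ n ih =>
    intro s i
    by_cases hi : i ≤ kk p q s
    · rw [Phi_plateau _ _ _ hi, Upp, if_pos hi]
    · push_neg at hi
      rw [Phi_tail n s i (by omega), Upp, if_neg (by omega)]
      have := conv_le h (s-1) i (by rw [sub_add_cancel]; omega) (Phi r m p q η n (s-1)) (ih (s-1))
      rw [sub_add_cancel] at this
      exact this

lemma Phi_le_one (h : Good r m p q η) (n : ℕ) (s i : ℤ) : Phi r m p q η n s i ≤ 1 :=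
  le_trans (Phi_le_Upp h n s i) (Upp_le_one h s i)

lemma Low_le_Phi (h : Good r m p q η) : ∀ (n : ℕ) (s i : ℤ),
    Low p q η s i ≤ Phi r m p q η n s i := by
  intro n
  induction n with
  | zero =>
    intro s i
    show Low p q η s i ≤ Upp p q η s i
    rw [Low, Upp]; split_ifs with hi
    · exact le_rfl
    · have hq := h.hq
      apply zpow_le_zpow_right₀ h.heta1.le; omega
  | succ n ih =>
    intro s i
    by_cases hi : i ≤ kk p q s
    · rw [Phi_plateau _ _ _ hi, Low, if_pos hi]
    · push_neg at hi
      rw [Phi_tail n s i (by omega), Low, if_neg (by omega)]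
      have := conv_ge h (s-1) i (by rw [sub_add_cancel]; omega) (Phi r m p q η n (s-1)) (ih (s-1))
      rw [sub_add_cancel] at this
      exact this

lemma Low_pos (h : Good r m p q η) (s i : ℤ) : 0 < Low p q η s i := by
  rw [Low]; split_ifs
  · norm_num
  · exact zpow_pos h.heta0 _

lemma Phi_pos (h : Good r m p q η) (n : ℕ) (s i : ℤ) : 0 < Phi r m p q η n s i :=
  lt_of_lt_of_le (Low_pos h s i) (Low_le_Phi h n s i)

lemma Phi_antitone (h : Good r m p q η) : ∀ (n : ℕ) (s i : ℤ),
    Phi r m p q η (n+1) s i ≤ Phi r m p q η n s i := by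
  intro n
  induction n with
  | zero => intro s i; exact Phi_le_Upp h 1 s i
  | succ n ih =>
    intro s i
    by_cases hi : i ≤ kk p q s
    · rw [Phi_plateau _ _ _ hi, Phi_plateau _ _ _ hi]
    · push_neg at hi
      rw [Phi_tail (n+1) s i (by omega), Phi_tail n s i (by omega)]
      have hm2 : (0:ℝ) ≤ m/2 := by linarith [h.hm0]
      have h1m : (0:ℝ) ≤ 1 - m := by linarith [h.hm1]
      apply mul_le_mul_of_nonneg_left _ h.hr0.le
      have t1 := mul_le_mul_of_nonneg_left (ih (s-1) (i-1)) hm2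
      have t2 := mul_le_mul_of_nonneg_left (ih (s-1) i) h1m
      have t3 := mul_le_mul_of_nonneg_left (ih (s-1) (i+1)) hm2
      linarith

lemma Phi_period (h : Good r m p q η) : ∀ (n : ℕ) (s i : ℤ),
    Phi r m p q η n (s + q) i = Phi r m p q η n s (i - p) := by
  intro n
  induction n with
  | zero =>
    intro s i
    show Upp p q η (s+q) i = Upp p q η s (i - p)
    rw [Upp, Upp, kk_add_q h.hq]
    have hcond : (i ≤ kk p q s + p) ↔ (i - p ≤ kk p q s) := by omega
    by_cases hc : i ≤ kk p q s + p
    · rw [if_pos hc, if_pos (hcond.1 hc)]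
    · rw [if_neg hc, if_neg (fun hh => hc (hcond.2 hh))]
      congr 1; ring
  | succ n ih =>
    intro s i
    have hk : kk p q (s + q) = kk p q s + p := kk_add_q h.hq s
    by_cases hi : i - p ≤ kk p q s
    · rw [Phi_plateau _ _ _ (by omega : i ≤ kk p q (s+q)), Phi_plateau _ _ _ hi]
    · push_neg at hi
      rw [Phi_tail n (s + q) i (by omega), Phi_tail n s (i - p) (by omega)]
      have e : s + (q:ℤ) - 1 = (s - 1) + q := by ring
      rw [e, ih (s-1) (i-1), ih (s-1) i, ih (s-1) (i+1)]
      have e1 : i - 1 - p = i - p - 1 := by ring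
      have e2 : i + 1 - p = i - p + 1 := by ring
      rw [e1, e2]

-- join3
variable {r m : ℝ} {p q : ℕ} {η : ℝ}

lemma Phi_zero (s i : ℤ) : Phi r m p q η 0 s i = Upp p q η s i := rfl

lemma Upp_at (s y : ℤ) (hy : 1 ≤ y) :
    Upp p q η s (kk p q s + y) = η^((q:ℤ) - 1 - us p q s - y*q) := by
  rw [Upp, if_neg (by omega)]
  congr 1
  have := kk_eq (p := p) (q := q) s
  linear_combination -this

/-- backward-step dichotomy. -/
lemma back (h : Good r m p q η) (a : ℤ) :
    ((q:ℤ) - p ≤ us p q a ∧ us p q (a-1) = us p q a + p - q ∧ kk p q a = kk p q (a-1) + 1)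
  ∨ (us p q a < (q:ℤ) - p ∧ us p q (a-1) = us p q a + p ∧ kk p q a = kk p q (a-1)) := by
  have h1 := us_succ (p := p) h.hq h.hpq (a-1)
  have h2 := kk_succ (p := p) h.hq h.hpq (a-1)
  rw [sub_add_cancel] at h1 h2
  have h3 := us_nonneg (p := p) h.hq (a-1)
  have h4 := us_lt (p := p) h.hq (a-1)
  have h5 := us_nonneg (p := p) h.hq a
  have h6 := us_lt (p := p) h.hq a
  have hpq : (p:ℤ) < q := by exact_mod_cast h.hpq
  by_cases hc : us p q (a-1) < p
  · left; rw [if_pos hc] at h1 h2; omega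
  · right; rw [if_neg hc] at h1 h2; omega

lemma conv_mono (h : Good r m p q η) {x1 x2 x3 y1 y2 y3 : ℝ}
    (e1 : x1 ≤ y1) (e2 : x2 ≤ y2) (e3 : x3 ≤ y3) :
    r*(m/2*x1 + (1-m)*x2 + m/2*x3) ≤ r*(m/2*y1 + (1-m)*y2 + m/2*y3) := by
  have hm2 : (0:ℝ) ≤ m/2 := by linarith [h.hm0]
  have h1m : (0:ℝ) ≤ 1 - m := by linarith [h.hm1]
  apply mul_le_mul_of_nonneg_left _ h.hr0.le
  have t1 := mul_le_mul_of_nonneg_left e1 hm2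
  have t2 := mul_le_mul_of_nonneg_left e2 h1m
  have t3 := mul_le_mul_of_nonneg_left e3 hm2
  linarith

/-- The two fundamental comparison lemmas, proven by mutual induction:
J1 : profiles aligned at their plateau edges are ordered by the residue `us`;
J2 : any profile one site deeper is below any other profile. -/
lemma J (h : Good r m p q η) : ∀ n : ℕ,
    (∀ a b y : ℤ, us p q a ≤ us p q b →
      Phi r m p q η n b (kk p q b + y) ≤ Phi r m p q η n a (kk p q a + y))
  ∧ (∀ a b y : ℤ, Phi r m p q η n a (kk p q a + 1 + y) ≤ Phi r m p q η n b (kk p q b + y)) := by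
  intro n
  induction n with
  | zero =>
    constructor
    · intro a b y hab
      by_cases hy : y ≤ 0
      · rw [Phi_plateau _ _ _ (by omega), Phi_plateau _ _ _ (by omega)]
      · rw [Phi_zero, Phi_zero, Upp_at _ _ (by omega), Upp_at _ _ (by omega)]
        exact zpow_le_zpow_right₀ h.heta1.le (by omega)
    · intro a b y
      by_cases hy1 : y ≤ -1
      · rw [Phi_plateau _ _ _ (by omega), Phi_plateau _ _ _ (by omega)]
      · by_cases hy0 : y = 0
        · subst hy0
          rw [Phi_plateau _ _ (kk p q b + 0) (by omega)]
          exact Phi_le_one h 0 _ _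
        · have hy : 1 ≤ y := by omega
          rw [Phi_zero, Phi_zero, show kk p q a + 1 + y = kk p q a + (1+y) from by ring,
            Upp_at _ _ (by omega), Upp_at _ _ (by omega)]
          apply zpow_le_zpow_right₀ h.heta1.le
          have h5 := us_nonneg (p := p) h.hq a
          have h6 := us_lt (p := p) h.hq b
          have : (1+y)*(q:ℤ) = q + y*q := by ring
          omega
  | succ n ih =>
    obtain ⟨J1n, J2n⟩ := ih
    constructor
    · intro a b y hab
      by_cases hy : y ≤ 0
      · rw [Phi_plateau _ _ _ (by omega), Phi_plateau _ _ _ (by omega)]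
      · push_neg at hy
        rw [Phi_tail n b (kk p q b + y) (by omega), Phi_tail n a (kk p q a + y) (by omega)]
        rcases back h a with ⟨ha1, ha2, ha3⟩ | ⟨ha1, ha2, ha3⟩ <;>
          rcases back h b with ⟨hb1, hb2, hb3⟩ | ⟨hb1, hb2, hb3⟩
        · -- δa = 1, δb = 1
          have hab' : us p q (a-1) ≤ us p q (b-1) := by omega
          refine conv_mono h ?_ ?_ ?_
          · rw [show kk p q b + y - 1 = kk p q (b-1) + y from by omega,
               show kk p q a + y - 1 = kk p q (a-1) + y from by omega]
            exact J1n _ _ _ hab'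
          · rw [show kk p q b + y = kk p q (b-1) + (y+1) from by omega,
               show kk p q a + y = kk p q (a-1) + (y+1) from by omega]
            exact J1n _ _ _ hab'
          · rw [show kk p q b + y + 1 = kk p q (b-1) + (y+2) from by omega,
               show kk p q a + y + 1 = kk p q (a-1) + (y+2) from by omega]
            exact J1n _ _ _ hab'
        · -- δa = 1, δb = 0 : impossible
          exfalso; omega
        · -- δa = 0, δb = 1 : use J2
          refine conv_mono h ?_ ?_ ?_
          · rw [show kk p q b + y - 1 = kk p q (b-1) + 1 + (y-1) from by omega,
               show kk p q a + y - 1 = kk p q (a-1) + (y-1) from by omega]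
            exact J2n _ _ _
          · rw [show kk p q b + y = kk p q (b-1) + 1 + y from by omega,
               show kk p q a + y = kk p q (a-1) + y from by omega]
            exact J2n _ _ _
          · rw [show kk p q b + y + 1 = kk p q (b-1) + 1 + (y+1) from by omega,
               show kk p q a + y + 1 = kk p q (a-1) + (y+1) from by omega]
            exact J2n _ _ _
        · -- δa = 0, δb = 0
          have hab' : us p q (a-1) ≤ us p q (b-1) := by omega
          refine conv_mono h ?_ ?_ ?_
          · rw [show kk p q b + y - 1 = kk p q (b-1) + (y-1) from by omega,
               show kk p q a + y - 1 = kk p q (a-1) + (y-1) from by omega]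
            exact J1n _ _ _ hab'
          · rw [show kk p q b + y = kk p q (b-1) + y from by omega,
               show kk p q a + y = kk p q (a-1) + y from by omega]
            exact J1n _ _ _ hab'
          · rw [show kk p q b + y + 1 = kk p q (b-1) + (y+1) from by omega,
               show kk p q a + y + 1 = kk p q (a-1) + (y+1) from by omega]
            exact J1n _ _ _ hab'
    · intro a b y
      by_cases hy1 : y ≤ -1
      · rw [Phi_plateau _ _ _ (by omega), Phi_plateau _ _ _ (by omega)]
      · by_cases hy0 : y = 0
        · subst hy0
          rw [Phi_plateau _ _ (kk p q b + 0) (by omega)]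
          exact Phi_le_one h (n+1) _ _
        · have hy : 1 ≤ y := by omega
          rw [Phi_tail n a (kk p q a + 1 + y) (by omega), Phi_tail n b (kk p q b + y) (by omega)]
          rcases back h a with ⟨ha1, ha2, ha3⟩ | ⟨ha1, ha2, ha3⟩ <;>
            rcases back h b with ⟨hb1, hb2, hb3⟩ | ⟨hb1, hb2, hb3⟩
          · -- δa = 1, δb = 1
            refine conv_mono h ?_ ?_ ?_
            · rw [show kk p q a + 1 + y - 1 = kk p q (a-1) + 1 + y from by omega,
                 show kk p q b + y - 1 = kk p q (b-1) + y from by omega]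
              exact J2n _ _ _
            · rw [show kk p q a + 1 + y = kk p q (a-1) + 1 + (y+1) from by omega,
                 show kk p q b + y = kk p q (b-1) + (y+1) from by omega]
              exact J2n _ _ _
            · rw [show kk p q a + 1 + y + 1 = kk p q (a-1) + 1 + (y+2) from by omega,
                 show kk p q b + y + 1 = kk p q (b-1) + (y+2) from by omega]
              exact J2n _ _ _
          · -- δa = 1, δb = 0 : two steps of J2
            refine conv_mono h ?_ ?_ ?_
            · calc Phi r m p q η n (a-1) (kk p q a + 1 + y - 1)
                  = Phi r m p q η n (a-1) (kk p q (a-1) + 1 + y) := by rw [show kk p q a + 1 + y - 1 = kk p q (a-1) + 1 + y from by omega]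
                _ ≤ Phi r m p q η n (a-1) (kk p q (a-1) + y) := J2n _ _ _
                _ = Phi r m p q η n (a-1) (kk p q (a-1) + 1 + (y-1)) := by rw [show kk p q (a-1) + y = kk p q (a-1) + 1 + (y-1) from by omega]
                _ ≤ Phi r m p q η n (b-1) (kk p q (b-1) + (y-1)) := J2n _ _ _
                _ = Phi r m p q η n (b-1) (kk p q b + y - 1) := by rw [show kk p q (b-1) + (y-1) = kk p q b + y - 1 from by omega]
            · calc Phi r m p q η n (a-1) (kk p q a + 1 + y)
                  = Phi r m p q η n (a-1) (kk p q (a-1) + 1 + (y+1)) := by rw [show kk p q a + 1 + y = kk p q (a-1) + 1 + (y+1) from by omega]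
                _ ≤ Phi r m p q η n (a-1) (kk p q (a-1) + (y+1)) := J2n _ _ _
                _ = Phi r m p q η n (a-1) (kk p q (a-1) + 1 + y) := by rw [show kk p q (a-1) + (y+1) = kk p q (a-1) + 1 + y from by omega]
                _ ≤ Phi r m p q η n (b-1) (kk p q (b-1) + y) := J2n _ _ _
                _ = Phi r m p q η n (b-1) (kk p q b + y) := by rw [show kk p q (b-1) + y = kk p q b + y from by omega]
            · calc Phi r m p q η n (a-1) (kk p q a + 1 + y + 1)
                  = Phi r m p q η n (a-1) (kk p q (a-1) + 1 + (y+2)) := by rw [show kk p q a + 1 + y + 1 = kk p q (a-1) + 1 + (y+2) from by omega]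
                _ ≤ Phi r m p q η n (a-1) (kk p q (a-1) + (y+2)) := J2n _ _ _
                _ = Phi r m p q η n (a-1) (kk p q (a-1) + 1 + (y+1)) := by rw [show kk p q (a-1) + (y+2) = kk p q (a-1) + 1 + (y+1) from by omega]
                _ ≤ Phi r m p q η n (b-1) (kk p q (b-1) + (y+1)) := J2n _ _ _
                _ = Phi r m p q η n (b-1) (kk p q b + y + 1) := by rw [show kk p q (b-1) + (y+1) = kk p q b + y + 1 from by omega]
          · -- δa = 0, δb = 1 : same depth, use J1 with us (b-1) ≤ us (a-1)
            have h6 := us_lt (p := p) h.hq b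
            have h5 := us_nonneg (p := p) h.hq a
            have hba : us p q (b-1) ≤ us p q (a-1) := by omega
            refine conv_mono h ?_ ?_ ?_
            · rw [show kk p q a + 1 + y - 1 = kk p q (a-1) + y from by omega,
                 show kk p q b + y - 1 = kk p q (b-1) + y from by omega]
              exact J1n _ _ _ hba
            · rw [show kk p q a + 1 + y = kk p q (a-1) + (y+1) from by omega,
                 show kk p q b + y = kk p q (b-1) + (y+1) from by omega]
              exact J1n _ _ _ hba
            · rw [show kk p q a + 1 + y + 1 = kk p q (a-1) + (y+2) from by omega,
                 show kk p q b + y + 1 = kk p q (b-1) + (y+2) from by omega]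
              exact J1n _ _ _ hba
          · -- δa = 0, δb = 0
            refine conv_mono h ?_ ?_ ?_
            · rw [show kk p q a + 1 + y - 1 = kk p q (a-1) + 1 + (y-1) from by omega,
                 show kk p q b + y - 1 = kk p q (b-1) + (y-1) from by omega]
              exact J2n _ _ _
            · rw [show kk p q a + 1 + y = kk p q (a-1) + 1 + y from by omega,
                 show kk p q b + y = kk p q (b-1) + y from by omega]
              exact J2n _ _ _
            · rw [show kk p q a + 1 + y + 1 = kk p q (a-1) + 1 + (y+1) from by omega,
                 show kk p q b + y + 1 = kk p q (b-1) + (y+1) from by omega]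
              exact J2n _ _ _

-- join4
variable {r m : ℝ} {p q : ℕ} {η : ℝ}

/-- The limiting traveling-wave orbit. -/
noncomputable def phiL (r m : ℝ) (p q : ℕ) (η : ℝ) (s i : ℤ) : ℝ :=
  ⨅ n : ℕ, Phi r m p q η n s i

lemma Phi_bddBelow (h : Good r m p q η) (s i : ℤ) :
    BddBelow (Set.range (fun n => Phi r m p q η n s i)) := by
  refine ⟨0, ?_⟩
  rintro x ⟨n, rfl⟩
  exact (Phi_pos h n s i).le

lemma phiL_tendsto (h : Good r m p q η) (s i : ℤ) :
    Filter.Tendsto (fun n => Phi r m p q η n s i) Filter.atTop (nhds (phiL r m p q η s i)) :=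
  tendsto_atTop_ciInf (antitone_nat_of_succ_le (fun n => Phi_antitone h n s i)) (Phi_bddBelow h s i)

lemma phiL_le_Phi (h : Good r m p q η) (n : ℕ) (s i : ℤ) :
    phiL r m p q η s i ≤ Phi r m p q η n s i :=
  ciInf_le (Phi_bddBelow h s i) n

lemma phiL_le_Upp (h : Good r m p q η) (s i : ℤ) : phiL r m p q η s i ≤ Upp p q η s i :=
  phiL_le_Phi h 0 s i

lemma Low_le_phiL (h : Good r m p q η) (s i : ℤ) : Low p q η s i ≤ phiL r m p q η s i :=
  le_ciInf (fun n => Low_le_Phi h n s i)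

lemma phiL_pos (h : Good r m p q η) (s i : ℤ) : 0 < phiL r m p q η s i :=
  lt_of_lt_of_le (Low_pos h s i) (Low_le_phiL h s i)

lemma phiL_le_one (h : Good r m p q η) (s i : ℤ) : phiL r m p q η s i ≤ 1 :=
  le_trans (phiL_le_Phi h 0 s i) (Upp_le_one h s i)

lemma phiL_plateau (h : Good r m p q η) (s i : ℤ) (hi : i ≤ kk p q s) :
    phiL r m p q η s i = 1 := by
  have : ∀ n : ℕ, Phi r m p q η n s i = 1 := fun n => Phi_plateau n s i hi
  rw [phiL]
  simp only [this]
  exact ciInf_const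

lemma phiL_tail (h : Good r m p q η) (s i : ℤ) (hi : kk p q (s+1) + 1 ≤ i) :
    phiL r m p q η (s+1) i =
      r*(m/2 * phiL r m p q η s (i-1) + (1-m) * phiL r m p q η s i
         + m/2 * phiL r m p q η s (i+1)) := by
  have hks : kk p q s ≤ kk p q (s+1) := kk_mono h.hq h.hpq (by omega)
  have h1 : Filter.Tendsto (fun n => Phi r m p q η (n+1) (s+1) i) Filter.atTop
      (nhds (phiL r m p q η (s+1) i)) :=
    (phiL_tendsto h (s+1) i).comp (Filter.tendsto_add_atTop_nat 1)
  have h2 : ∀ n : ℕ, Phi r m p q η (n+1) (s+1) i =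
      r*(m/2 * Phi r m p q η n s (i-1) + (1-m) * Phi r m p q η n s i
         + m/2 * Phi r m p q η n s (i+1)) := by
    intro n
    have := Phi_tail (r := r) (m := m) (p := p) (q := q) (η := η) n (s+1) i (by omega)
    rw [this, add_sub_cancel_right]
  simp only [h2] at h1
  have h3 : Filter.Tendsto (fun n => r*(m/2 * Phi r m p q η n s (i-1)
      + (1-m) * Phi r m p q η n s i + m/2 * Phi r m p q η n s (i+1))) Filter.atTop
      (nhds (r*(m/2 * phiL r m p q η s (i-1) + (1-m) * phiL r m p q η s i
         + m/2 * phiL r m p q η s (i+1)))) := by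
    apply Filter.Tendsto.const_mul
    exact (((phiL_tendsto h s (i-1)).const_mul _).add
      ((phiL_tendsto h s i).const_mul _)).add ((phiL_tendsto h s (i+1)).const_mul _)
  exact tendsto_nhds_unique h1 h3

lemma phiL_period (h : Good r m p q η) (s i : ℤ) :
    phiL r m p q η (s + q) i = phiL r m p q η s (i - p) := by
  rw [phiL, phiL]
  congr 1
  funext n
  exact Phi_period h n s i

lemma phiL_J1 (h : Good r m p q η) (a b y : ℤ) (hab : us p q a ≤ us p q b) :
    phiL r m p q η b (kk p q b + y) ≤ phiL r m p q η a (kk p q a + y) := by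
  apply le_ciInf
  intro n
  exact le_trans (phiL_le_Phi h n b _) ((J h n).1 a b y hab)

lemma phiL_J2 (h : Good r m p q η) (a b y : ℤ) :
    phiL r m p q η a (kk p q a + 1 + y) ≤ phiL r m p q η b (kk p q b + y) := by
  apply le_ciInf
  intro n
  exact le_trans (phiL_le_Phi h n a _) ((J h n).2 a b y)

-- join5
variable {r m : ℝ} {p q : ℕ} {η : ℝ}

/-- interface, second and third site values. -/
noncomputable def vI (r m : ℝ) (p q : ℕ) (η : ℝ) (s : ℤ) : ℝ := phiL r m p q η s (kk p q s + 1)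
noncomputable def wI (r m : ℝ) (p q : ℕ) (η : ℝ) (s : ℤ) : ℝ := phiL r m p q η s (kk p q s + 2)
noncomputable def zI (r m : ℝ) (p q : ℕ) (η : ℝ) (s : ℤ) : ℝ := phiL r m p q η s (kk p q s + 3)

lemma phiL_at_le (h : Good r m p q η) (s y : ℤ) (hy : 1 ≤ y) :
    phiL r m p q η s (kk p q s + y) ≤ η^((q:ℤ) - 1 - us p q s - y*q) := by
  have := phiL_le_Upp h s (kk p q s + y)
  rwa [Upp_at s y hy] at this

lemma vI_le (h : Good r m p q η) (s : ℤ) : vI r m p q η s ≤ η^(-1 - us p q s) := by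
  have := phiL_at_le h s 1 le_rfl
  rw [vI]
  convert this using 2
  ring

lemma wI_le (h : Good r m p q η) (s : ℤ) : wI r m p q η s ≤ η^(-1 - us p q s - q) := by
  have := phiL_at_le h s 2 (by norm_num)
  rw [wI]
  convert this using 2
  ring

lemma v_noncross (h : Good r m p q η) (s : ℤ) (hnc : ¬ us p q s < p) :
    vI r m p q η (s+1) = r*(m/2 * 1 + (1-m) * vI r m p q η s + m/2 * wI r m p q η s) := by
  have hk : kk p q (s+1) = kk p q s := by rw [kk_succ h.hq h.hpq, if_neg hnc, add_zero]
  have := phiL_tail h s (kk p q s + 1) (by omega)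
  rw [vI, hk, this]
  rw [show kk p q s + 1 - 1 = kk p q s from by ring, phiL_plateau h s _ le_rfl]
  rw [vI, wI, show kk p q s + 1 + 1 = kk p q s + 2 from by ring]

lemma v_cross (h : Good r m p q η) (s : ℤ) (hc : us p q s < p) :
    vI r m p q η (s+1) =
      r*(m/2 * vI r m p q η s + (1-m) * wI r m p q η s + m/2 * zI r m p q η s) := by
  have hk : kk p q (s+1) = kk p q s + 1 := by rw [kk_succ h.hq h.hpq, if_pos hc]
  have := phiL_tail h s (kk p q s + 2) (by omega)
  rw [vI, hk, show kk p q s + 1 + 1 = kk p q s + 2 from by ring, this]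
  rw [show kk p q s + 2 - 1 = kk p q s + 1 from by ring,
    show kk p q s + 2 + 1 = kk p q s + 3 from by ring]
  rfl

lemma us_add' (h : Good r m p q η) (s t : ℤ) :
    us p q (s + t) = (us p q s + us p q t) % q := by
  unfold us
  rw [show -((s + t) * (p:ℤ)) = (-(s*(p:ℤ))) + (-(t*(p:ℤ))) from by ring, Int.add_emod]

lemma us_congr (h : Good r m p q η) {s t : ℤ} (hdvd : (q:ℤ) ∣ s - t) :
    us p q s = us p q t := by
  unfold us
  obtain ⟨c, hc⟩ := hdvd
  have : -(s * (p:ℤ)) = -(t*(p:ℤ)) + (-(c*(p:ℤ)))*q := by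
    have : s = t + q*c := by omega
    rw [this]; ring
  rw [this, Int.add_mul_emod_self_right]

/-- gap seed at the flip step. -/
lemma gap_seed (h : Good r m p q η) (δ : ℤ) (hδ : us p q δ = 1) (t : ℤ)
    (ht : us p q t = (q:ℤ) - 1) :
    r*m/2 - η^((p:ℤ) - q - 1) ≤ vI r m p q η (t+1) - vI r m p q η (t+1+δ) := by
  have hq1 : (1:ℤ) ≤ q := by exact_mod_cast h.hq
  have hp1 : (1:ℤ) ≤ p := by exact_mod_cast h.hp
  have hpq : (p:ℤ) < q := by exact_mod_cast h.hpq
  -- X side : no crossing at t, so v(t+1) ≥ r m/2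
  have hX : r*m/2 ≤ vI r m p q η (t+1) := by
    have hnc : ¬ us p q t < p := by omega
    rw [v_noncross h t hnc]
    have h1 := (phiL_pos h t (kk p q t + 1)).le
    have h2 := (phiL_pos h t (kk p q t + 2)).le
    have hm2 : (0:ℝ) ≤ m/2 := by linarith [h.hm0]
    have h1m : (0:ℝ) ≤ 1 - m := by linarith [h.hm1]
    rw [vI, wI] at *
    nlinarith [h.hr0.le, mul_nonneg h1m h1, mul_nonneg hm2 h2]
  -- Y side : crossing at t+δ (us = 0), fresh interface bounded by the envelope
  have hYu : us p q (t + δ) = 0 := by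
    rw [us_add' h t δ, ht, hδ, show (q:ℤ) - 1 + 1 = q from by ring, Int.emod_self]
  have hYu' : us p q (t + δ + 1) = (q:ℤ) - p := by
    have := us_succ (p := p) h.hq h.hpq (t+δ)
    rw [hYu, if_pos (by omega)] at this
    omega
  have hY : vI r m p q η (t+1+δ) ≤ η^((p:ℤ) - q - 1) := by
    have e : t+1+δ = (t+δ)+1 := by ring
    rw [e]
    have := vI_le h ((t+δ)+1)
    rw [hYu'] at this
    convert this using 2
    ring
  linarith

/-- one propagation step of the gap. -/
lemma gap_step (h : Good r m p q η) (δ : ℤ) (hδ : us p q δ = 1) (t : ℤ)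
    (h1 : us p q t ≠ (q:ℤ) - 1) (h2 : us p q t ≠ (p:ℤ) - 1) :
    (r*m/2) * (vI r m p q η t - vI r m p q η (t+δ)) ≤
      vI r m p q η (t+1) - vI r m p q η (t+1+δ) := by
  have hq1 : (1:ℤ) ≤ q := by exact_mod_cast h.hq
  have hp1 : (1:ℤ) ≤ p := by exact_mod_cast h.hp
  have hpq : (p:ℤ) < q := by exact_mod_cast h.hpq
  have hu0 := us_nonneg (p := p) h.hq t
  have hu1 := us_lt (p := p) h.hq t
  have hY : us p q (t + δ) = us p q t + 1 := by
    rw [us_add' h t δ, hδ, Int.emod_eq_of_lt (by omega) (by omega)]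
  have hord : us p q t ≤ us p q (t + δ) := by omega
  -- nonneg gaps at depth 1, 2, 3 from J1
  have g1 : vI r m p q η (t+δ) ≤ vI r m p q η t := phiL_J1 h t (t+δ) 1 hord
  have g2 : wI r m p q η (t+δ) ≤ wI r m p q η t := phiL_J1 h t (t+δ) 2 hord
  have g3 : zI r m p q η (t+δ) ≤ zI r m p q η t := phiL_J1 h t (t+δ) 3 hord
  have e : t+1+δ = (t+δ)+1 := by ring
  have hm2 : (0:ℝ) ≤ m/2 := by linarith [h.hm0]
  have h1m : (0:ℝ) ≤ 1 - m := by linarith [h.hm1]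
  have hmm : m/2 ≤ 1 - m := by linarith [h.hm23]
  by_cases hc : us p q t < p
  · -- both cross
    have hcY : us p q (t+δ) < p := by omega
    rw [v_cross h t hc, e, v_cross h (t+δ) hcY]
    nlinarith [h.hr0.le, mul_le_mul_of_nonneg_left (sub_nonneg.2 g2) h1m,
      mul_le_mul_of_nonneg_left (sub_nonneg.2 g3) hm2]
  · -- both noncross
    have hcY : ¬ us p q (t+δ) < p := by omega
    rw [v_noncross h t hc, e, v_noncross h (t+δ) hcY]
    have key : (r*m/2) * (vI r m p q η t - vI r m p q η (t+δ)) ≤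
        (r*(1-m)) * (vI r m p q η t - vI r m p q η (t+δ)) := by
      apply mul_le_mul_of_nonneg_right _ (sub_nonneg.2 g1)
      nlinarith [h.hr0.le]
    nlinarith [h.hr0.le, mul_le_mul_of_nonneg_left (sub_nonneg.2 g2) hm2]

-- join6
variable {r m : ℝ} {p q : ℕ} {η : ℝ}

lemma gap_chain (h : Good r m p q η) (δ : ℤ) (hδ : us p q δ = 1) (t0 : ℤ)
    (ht0 : us p q t0 = (q:ℤ) - 1) :
    ∀ j : ℕ, (∀ j' : ℕ, j' < j →
        us p q (t0 + 1 + j') ≠ (q:ℤ) - 1 ∧ us p q (t0 + 1 + j') ≠ (p:ℤ) - 1) →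
      (r*m/2)^j * (r*m/2 - η^((p:ℤ) - q - 1)) ≤
        vI r m p q η (t0+1+j) - vI r m p q η (t0+1+j+δ) := by
  intro j
  induction j with
  | zero =>
    intro _
    simpa using gap_seed h δ hδ t0 ht0
  | succ j ih =>
    intro hcond
    have prev := ih (fun j' hj' => hcond j' (by omega))
    have hstep := gap_step h δ hδ (t0+1+j) (hcond j (by omega)).1 (hcond j (by omega)).2
    have hrm2 : (0:ℝ) ≤ r*m/2 := by
      have := h.hr0.le; have := h.hm0.le; positivity
    have ecast : ((j+1 : ℕ) : ℤ) = (j:ℤ)+1 := by push_cast; ring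
    have e1 : t0 + 1 + ((j:ℤ)+1) = t0 + 1 + (j:ℤ) + 1 := by ring
    rw [ecast, e1]
    calc (r*m/2)^(j+1) * (r*m/2 - η^((p:ℤ) - q - 1))
        = (r*m/2) * ((r*m/2)^j * (r*m/2 - η^((p:ℤ) - q - 1))) := by ring
      _ ≤ (r*m/2) * (vI r m p q η (t0+1+j) - vI r m p q η (t0+1+j+δ)) :=
          mul_le_mul_of_nonneg_left prev hrm2
      _ ≤ _ := hstep

/-- window bounds -/
noncomputable def cmaxW (r m : ℝ) (p q : ℕ) (η : ℝ) (T : ℤ) : ℝ :=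
  m/2 + (1-m) * vI r m p q η T + m/2 * wI r m p q η T

noncomputable def cminW (r m : ℝ) (p q : ℕ) (η : ℝ) (T δ : ℤ) : ℝ :=
  max (m/2 + (1-m) * vI r m p q η (T+δ) + m/2 * wI r m p q η (T+δ)) (η^((p:ℤ) - q - 1)/r)

/-- The main step lemma: for `c` in the window, one application of `G` moves the orbit one
phase forward. -/
lemma G_step (h : Good r m p q η) (T δ : ℤ) (hT : us p q T = (p:ℤ) - 1)
    (hTδ : us p q (T+δ) = (p:ℤ)) (c : ℝ)
    (hc1 : cminW r m p q η T δ < c) (hc2 : c < cmaxW r m p q η T)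
    (s i : ℤ) : G r c m (phiL r m p q η s) i = phiL r m p q η (s+1) i := by
  have hq1 : (1:ℤ) ≤ q := by exact_mod_cast h.hq
  have hp1 : (1:ℤ) ≤ p := by exact_mod_cast h.hp
  have hpq : (p:ℤ) < q := by exact_mod_cast h.hpq
  have hm2 : (0:ℝ) ≤ m/2 := by linarith [h.hm0]
  have h1m : (0:ℝ) ≤ 1 - m := by linarith [h.hm1]
  have hketa : (0:ℝ) < η⁻¹ := inv_pos.2 h.heta0
  have hetainv : η⁻¹ ≤ 1/2 := by
    rw [inv_le_comm₀ h.heta0 (by norm_num)]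
    linarith [h.heta]
  -- bound cmax above
  have hcmax_le : cmaxW r m p q η T ≤ m/2 + 2*η⁻¹ := by
    have hv := vI_le h T
    have hw := wI_le h T
    have husT := us_nonneg (p := p) h.hq T
    have hv' : vI r m p q η T ≤ η⁻¹ := by
      refine le_trans hv ?_
      have : η^(-1 - us p q T) ≤ η^(-1 : ℤ) :=
        zpow_le_zpow_right₀ h.heta1.le (by omega)
      simpa [zpow_neg_one] using this
    have hw' : wI r m p q η T ≤ η⁻¹ := by
      refine le_trans hw ?_
      have : η^(-1 - us p q T - q) ≤ η^(-1 : ℤ) :=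
        zpow_le_zpow_right₀ h.heta1.le (by omega)
      simpa [zpow_neg_one] using this
    have e1 : (1-m) * vI r m p q η T ≤ 1 * η⁻¹ :=
      mul_le_mul (by linarith) hv' (phiL_pos h T _).le one_pos.le
    have e2 : m/2 * wI r m p q η T ≤ 1 * η⁻¹ :=
      mul_le_mul (by linarith [h.hm1]) hw' (phiL_pos h T _).le one_pos.le
    rw [cmaxW]
    linarith
  have hc_lt : c < 1 - m := lt_of_lt_of_le hc2 (le_trans hcmax_le h.hN4.le)
  rw [G, g]
  by_cases hi : i ≤ kk p q (s+1)
  · -- output is 1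
    have hout : phiL r m p q η (s+1) i = 1 := phiL_plateau h (s+1) i hi
    rw [hout]
    rw [if_neg]
    push_neg
    by_cases hi2 : i ≤ kk p q s
    · -- deep plateau
      have e1 : phiL r m p q η s (i-1) = 1 := phiL_plateau h s _ (by omega)
      have e2 : phiL r m p q η s i = 1 := phiL_plateau h s _ hi2
      have e3 := (phiL_pos h s (i+1)).le
      nlinarith [hc_lt, h.hm0]
    · -- crossing site
      have hcross : us p q s < p := by
        have := kk_succ (p := p) h.hq h.hpq s
        by_contra hnc
        rw [if_neg hnc, add_zero] at this
        omega
      have hik : i = kk p q s + 1 := by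
        have := kk_succ (p := p) h.hq h.hpq s
        rw [if_pos hcross] at this
        omega
      -- average = m/2 + (1-m) v_s + m/2 w_s ≥ cmax > c
      have e1 : phiL r m p q η s (i-1) = 1 := phiL_plateau h s _ (by omega)
      have husT : us p q s ≤ us p q T := by
        rw [hT]; omega
      have hv : vI r m p q η T ≤ vI r m p q η s := phiL_J1 h s T 1 husT
      have hw : wI r m p q η T ≤ wI r m p q η s := phiL_J1 h s T 2 husT
      have e2 : phiL r m p q η s i = vI r m p q η s := by rw [vI, hik]
      have e3 : phiL r m p q η s (i+1) = wI r m p q η s := by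
        rw [wI, hik, show kk p q s + 1 + 1 = kk p q s + 2 from by ring]
      rw [e1, e2, e3]
      have : cmaxW r m p q η T ≤ m / 2 * 1 + (1 - m) * vI r m p q η s + m / 2 * wI r m p q η s := by
        rw [cmaxW]
        have t1 := mul_le_mul_of_nonneg_left hv h1m
        have t2 := mul_le_mul_of_nonneg_left hw hm2
        linarith
      linarith
  · -- tail site : output r * average
    push_neg at hi
    have hrec := phiL_tail h s i (by omega)
    have havg_lt : m / 2 * phiL r m p q η s (i - 1) + (1 - m) * phiL r m p q η s i +
        m / 2 * phiL r m p q η s (i + 1) < c := by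
      have hks := kk_mono h.hq h.hpq (show s ≤ s+1 from by omega)
      by_cases hcase : (¬ us p q s < p) ∧ i = kk p q s + 1
      · -- non-crossing interface site : compare with phase T+δ
        obtain ⟨hnc, hik⟩ := hcase
        have e1 : phiL r m p q η s (i-1) = 1 := phiL_plateau h s _ (by omega)
        have husT : us p q (T+δ) ≤ us p q s := by rw [hTδ]; omega
        have hv : vI r m p q η s ≤ vI r m p q η (T+δ) := phiL_J1 h (T+δ) s 1 husT
        have hw : wI r m p q η s ≤ wI r m p q η (T+δ) := phiL_J1 h (T+δ) s 2 husT
        have e2 : phiL r m p q η s i = vI r m p q η s := by rw [vI, hik]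
        have e3 : phiL r m p q η s (i+1) = wI r m p q η s := by
          rw [wI, hik, show kk p q s + 1 + 1 = kk p q s + 2 from by ring]
        rw [e1, e2, e3]
        have hA : m/2 + (1-m) * vI r m p q η (T+δ) + m/2 * wI r m p q η (T+δ) ≤
            cminW r m p q η T δ := le_max_left _ _
        have t1 := mul_le_mul_of_nonneg_left hv h1m
        have t2 := mul_le_mul_of_nonneg_left hw hm2
        have : m / 2 * 1 + (1 - m) * vI r m p q η s + m / 2 * wI r m p q η s ≤
            cminW r m p q η T δ := by linarith
        linarith
      · -- deep tail site : envelope bound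
        have hupp : phiL r m p q η (s+1) i ≤ η^((p:ℤ) - q - 1) := by
          have hy : 1 ≤ i - kk p q (s+1) := by omega
          have := phiL_at_le h (s+1) (i - kk p q (s+1)) hy
          rw [show kk p q (s+1) + (i - kk p q (s+1)) = i from by ring] at this
          refine le_trans this (zpow_le_zpow_right₀ h.heta1.le ?_)
          have hu0 := us_nonneg (p := p) h.hq (s+1)
          have hksucc := kk_succ (p := p) h.hq h.hpq s
          by_cases hcr : us p q s < p
          · -- crossing : fresh residue is ≥ q - p
            have husucc := us_succ (p := p) h.hq h.hpq s
            rw [if_pos hcr] at husucc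
            have hu1 : (q:ℤ) - p ≤ us p q (s+1) := by
              have := us_nonneg (p := p) h.hq s
              omega
            nlinarith [hy, hu1]
          · -- non-crossing, depth ≥ 2
            rw [if_neg hcr, add_zero] at hksucc
            have hdepth : 2 ≤ i - kk p q (s+1) := by
              rcases not_and_or.1 hcase with hc1' | hc2'
              · exact absurd hcr (by simpa using hc1')
              · omega
            nlinarith [hdepth]
        have hfin : m / 2 * phiL r m p q η s (i - 1) + (1 - m) * phiL r m p q η s i +
            m / 2 * phiL r m p q η s (i + 1) ≤ η^((p:ℤ) - q - 1)/r := by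
          rw [hrec] at hupp
          rw [le_div_iff₀ h.hr0]
          linarith [hupp]
        have : η^((p:ℤ) - q - 1)/r ≤ cminW r m p q η T δ := le_max_right _ _
        linarith
    rw [if_pos havg_lt, hrec]

-- join7

set_option maxHeartbeats 1000000 in
lemma exists_good (r : ℝ) (hr : 1 < r) (p q : ℕ) (hp : 0 < p) (hpq : p < q)
    (m : ℝ) (hm0 : 0 < m) (hmstar : r * m < ((8*r)^q)⁻¹) (hm14 : m ≤ 1/4) :
    ∃ η : ℝ, Good r m p q η := by
  have hr0 : (0:ℝ) < r := lt_trans one_pos hr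
  have hrm0 : (0:ℝ) < r*m := mul_pos hr0 hm0
  have h8r : (1:ℝ) < 8*r := by linarith
  have h8rq : (1:ℝ) ≤ (8*r)^q := one_le_pow₀ h8r.le
  have hinv : (8*r)^q < (r*m)⁻¹ := by
    rwa [lt_inv_comm₀ (by positivity) hrm0]
  have hqp0 : 0 < q - p := by omega
  have hqpc : ((q - p : ℕ) : ℝ) = (q:ℝ) - p := by
    push_cast [Nat.cast_sub hpq.le]; ring
  have hqpR : (0:ℝ) < (q:ℝ) - p := by
    have : (p:ℝ) < q := by exact_mod_cast hpq
    linarith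
  set e : ℝ := ((q:ℝ) - p)⁻¹ with he
  have he0 : 0 < e := by positivity
  set x₁ : ℝ := ((r*m)⁻¹) ^ e with hx₁def
  set x₂ : ℝ := (2*(r*m)⁻¹) ^ e with hx₂def
  have hx₁0 : 0 < x₁ := Real.rpow_pos_of_pos (by positivity) e
  have hx₂0 : 0 < x₂ := Real.rpow_pos_of_pos (by positivity) e
  have hx₁pow : x₁ ^ (q - p : ℕ) = (r*m)⁻¹ := by
    rw [hx₁def, ← Real.rpow_natCast (((r*m)⁻¹) ^ e) (q-p), ← Real.rpow_mul (by positivity),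
      hqpc, he, inv_mul_cancel₀ (ne_of_gt hqpR), Real.rpow_one]
  have hx₂pow : x₂ ^ (q - p : ℕ) = 2*(r*m)⁻¹ := by
    rw [hx₂def, ← Real.rpow_natCast ((2*(r*m)⁻¹) ^ e) (q-p), ← Real.rpow_mul (by positivity),
      hqpc, he, inv_mul_cancel₀ (ne_of_gt hqpR), Real.rpow_one]
  have hx₁8r : 8*r ≤ x₁ := by
    have h1 : (8*r)^(q-p:ℕ) ≤ (8*r)^q := pow_le_pow_right₀ h8r.le (by omega)
    have h2 : (8*r)^(q-p:ℕ) ≤ x₁^(q-p:ℕ) := by rw [hx₁pow]; linarith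
    exact le_of_pow_le_pow_left₀ (by omega) hx₁0.le h2
  have hx₁1 : 1 ≤ x₁ := by linarith
  have hx₁x₂ : x₁ < x₂ := by
    rw [hx₁def, hx₂def]
    apply Real.rpow_lt_rpow (by positivity) _ he0
    have : (0:ℝ) < (r*m)⁻¹ := by positivity
    linarith
  -- the characteristic polynomial
  set Pf : ℝ → ℝ := fun x => r*(m/2*x^(2*q) + (1-m)*x^q + m/2) - x^(q+p) with hPf
  have hcont : ContinuousOn Pf (Set.Icc x₁ x₂) := by
    apply Continuous.continuousOn
    fun_prop
  have hsplit : ∀ x : ℝ, x^(2*q) = x^(q+p) * x^(q-p:ℕ) := by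
    intro x
    rw [← pow_add]
    congr 1
    omega
  have hP1 : Pf x₁ < 0 := by
    have hx1q : (1:ℝ) ≤ x₁^q := one_le_pow₀ hx₁1
    have hx1p : 8*r ≤ x₁^p := by
      calc 8*r ≤ x₁ := hx₁8r
      _ = x₁^1 := (pow_one x₁).symm
      _ ≤ x₁^p := pow_le_pow_right₀ hx₁1 hp
    have hkey : r*(m/2) * x₁^(2*q) = x₁^(q+p)/2 := by
      rw [hsplit, hx₁pow]
      field_simp
    have hqp : x₁^(q+p) = x₁^q * x₁^p := pow_add x₁ q p
    rw [hPf]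
    simp only
    have expand : r*(m/2*x₁^(2*q) + (1-m)*x₁^q + m/2) - x₁^(q+p)
        = (r*(m/2) * x₁^(2*q)) + r*(1-m)*x₁^q + r*m/2 - x₁^(q+p) := by ring
    rw [expand, hkey, hqp]
    have hA : (0:ℝ) < x₁^q := by positivity
    have hC : (0:ℝ) < r*x₁^q := by positivity
    have h1 : r*(1-m)*x₁^q ≤ r*x₁^q := by nlinarith
    have h2 : 8*(r*x₁^q) ≤ x₁^q * x₁^p := by nlinarith [hx1p, hA]
    have h3 : r*m/2 ≤ (r*x₁^q)/8 := by
      have e1 : r*1 ≤ r*x₁^q := mul_le_mul_of_nonneg_left hx1q hr0.le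
      have e2 : r*m ≤ r*(1/4) := mul_le_mul_of_nonneg_left hm14 hr0.le
      linarith
    linarith
  have hP2 : 0 < Pf x₂ := by
    have hkey : r*(m/2) * x₂^(2*q) = x₂^(q+p) := by
      rw [hsplit, hx₂pow]
      field_simp
    have hx2q : (0:ℝ) < x₂^q := by positivity
    have expand2 : r*(m/2*x₂^(2*q) + (1-m)*x₂^q + m/2) - x₂^(q+p)
        = r*(m/2)*x₂^(2*q) + r*(1-m)*x₂^q + r*m/2 - x₂^(q+p) := by ring
    rw [hPf]
    simp only
    rw [expand2, hkey]
    have hpos1 : (0:ℝ) < r*(1-m)*x₂^q := mul_pos (mul_pos hr0 (by linarith)) hx2q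
    have hpos2 : (0:ℝ) < r*m/2 := by positivity
    linarith
  -- IVT
  obtain ⟨η, hmem, hroot⟩ :=
    intermediate_value_Icc hx₁x₂.le hcont (Set.mem_Icc.2 ⟨hP1.le, hP2.le⟩)
  have hη1 : x₁ < η := by
    rcases eq_or_lt_of_le hmem.1 with hx | hx
    · exfalso; rw [← hx] at hroot; rw [hroot] at hP1; exact lt_irrefl 0 hP1
    · exact hx
  have hη0 : (0:ℝ) < η := lt_trans hx₁0 hη1
  have hη8r : 8*r < η := lt_of_le_of_lt hx₁8r hη1
  have hη2 : 2 ≤ η := by linarith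
  have hηq0 : η^q ≠ 0 := pow_ne_zero _ (ne_of_gt hη0)
  -- the identity
  have hidpow : r*(m/2*η^(2*q) + (1-m)*η^q + m/2) = η^(q+p) := by
    have := hroot
    rw [hPf] at this
    simp only at this
    linarith [this]
  have hid : r * (m/2 * η^(q:ℤ) + (1-m) + m/2 * η^(-(q:ℤ))) = η^(p:ℤ) := by
    rw [zpow_neg, zpow_natCast, zpow_natCast]
    have h2q : η^(2*q) = η^q * η^q := by rw [two_mul, pow_add]
    have hqp : η^(q+p) = η^q * η^p := pow_add η q p
    rw [h2q, hqp] at hidpow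
    field_simp
    linarith [hidpow]
  -- hN3
  have hetaqp : (r*m)⁻¹ < η^(q-p:ℕ) := by
    rw [← hx₁pow]
    exact pow_lt_pow_left₀ hη1 hx₁0.le (by omega)
  have hN3 : η^((p:ℤ) - q - 1) < r*m/2 := by
    have hsplitz : η^((p:ℤ) - q - 1) = (η^(q-p:ℕ))⁻¹ * η⁻¹ := by
      rw [← zpow_natCast η (q-p), ← zpow_neg, ← zpow_neg_one η, ← zpow_add₀ (ne_of_gt hη0)]
      congr 1
      push_cast [Nat.cast_sub hpq.le]
      ring
    rw [hsplitz]
    have h1 : (η^(q-p:ℕ))⁻¹ < r*m := by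
      rw [inv_lt_comm₀ (by positivity) hrm0]
      exact hetaqp
    have h2 : η⁻¹ ≤ (8*r)⁻¹ := by
      apply inv_anti₀ (by positivity) hη8r.le
    have h3 : (8*r)⁻¹ ≤ 1/8 := by
      rw [div_eq_inv_mul, mul_one]
      apply inv_anti₀ (by norm_num)
      linarith
    have h4 : (0:ℝ) < (η^(q-p:ℕ))⁻¹ := by positivity
    have h5 : (0:ℝ) < η⁻¹ := by positivity
    calc (η^(q-p:ℕ))⁻¹ * η⁻¹ < (r*m) * η⁻¹ := by
          apply mul_lt_mul_of_pos_right h1 h5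
      _ ≤ (r*m) * (1/8) := by
          apply mul_le_mul_of_nonneg_left _ hrm0.le
          linarith
      _ < r*m/2 := by nlinarith
  have hN4 : m/2 + 2*η⁻¹ < 1 - m := by
    have h2 : η⁻¹ ≤ 1/8 := by
      have : η⁻¹ ≤ (8*r)⁻¹ := inv_anti₀ (by positivity) hη8r.le
      have h3 : (8*r)⁻¹ ≤ 1/8 := by
        rw [div_eq_inv_mul, mul_one]
        apply inv_anti₀ (by norm_num)
        linarith
      linarith
    linarith
  have hrmle : r*m ≤ 1 := by
    have h9 : ((8*r)^q)⁻¹ ≤ 1 := by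
      rw [inv_le_one₀ (by positivity)]; exact h8rq
    linarith
  exact ⟨η, hr, hm0, by linarith, hp, hpq, hη2, hid, hN3, hN4, hrmle⟩

end TW

open TW in
set_option maxHeartbeats 1000000 in
theorem stmt_8 (r : ℝ) (hr : 1 < r) (p q : ℕ) (hp : 0 < p) (hpq : p < q)
    (hcop : Nat.Coprime p q) :
    ∃ mstar : ℝ, 0 < mstar ∧
      ∀ m : ℝ, 0 < m → m < min 1 mstar →
        ∃ cmin cmax : ℝ, 0 < cmin ∧ cmin < cmax ∧
          ∀ c : ℝ, cmin < c → c < cmax →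
            ∃ φ : ℤ → ℝ,
              (∀ i : ℤ, i ≤ 0 → φ i = 1) ∧
              (∀ i : ℤ, 0 < φ i) ∧
              Tendsto φ atTop (nhds 0) ∧
              ∀ i : ℤ, (G r c m)^[q] φ i = φ (i - p) := by
  classical
  have hr0 : (0:ℝ) < r := lt_trans one_pos hr
  have h8r1 : (1:ℝ) < 8*r := by linarith
  refine ⟨((8*r)^(q+1))⁻¹, by positivity, ?_⟩
  intro m hm0 hmlt
  rw [lt_min_iff] at hmlt
  obtain ⟨hm1', hmstar⟩ := hmlt
  have hq0 : 0 < q := lt_trans hp hpq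
  have hrmlt : r * m < ((8*r)^q)⁻¹ := by
    have h1 : r*m < r * ((8*r)^(q+1))⁻¹ := by
      apply mul_lt_mul_of_pos_left hmstar hr0
    have h2 : r * ((8*r)^(q+1))⁻¹ ≤ ((8*r)^q)⁻¹ := by
      rw [pow_succ, mul_inv]
      have h3 : r * (8*r)⁻¹ ≤ 1 := by
        rw [mul_inv_le_iff₀ (by positivity)]
        linarith
      calc r * (((8*r)^q)⁻¹ * (8*r)⁻¹) = ((8*r)^q)⁻¹ * (r * (8*r)⁻¹) := by ring
        _ ≤ ((8*r)^q)⁻¹ * 1 := by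
            apply mul_le_mul_of_nonneg_left h3 (by positivity)
        _ = ((8*r)^q)⁻¹ := mul_one _
    linarith
  have hm14 : m ≤ 1/4 := by
    have h1 : (8*r) ≤ (8*r)^(q+1) := by
      calc (8*r) = (8*r)^1 := (pow_one _).symm
      _ ≤ (8*r)^(q+1) := pow_le_pow_right₀ h8r1.le (by omega)
    have h2 : ((8*r)^(q+1))⁻¹ ≤ (8*r)⁻¹ := inv_anti₀ (by positivity) h1
    have h3 : (8*r)⁻¹ ≤ 1/8 := by
      rw [inv_le_comm₀ (by positivity) (by norm_num)]
      linarith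
    linarith
  obtain ⟨η, hG⟩ := exists_good r hr p q hp hpq m hm0 hrmlt hm14
  -- special times
  obtain ⟨δ, _, _, hδ⟩ := us_surj (p := p) hG.hq hcop 1 (by omega) (by
    have : 2 ≤ q := by omega
    exact_mod_cast (by omega : (1:ℤ) < (q:ℤ)))
  obtain ⟨T, _, _, hT⟩ := us_surj (p := p) hG.hq hcop ((p:ℤ) - 1)
    (by
      have h1 : (1:ℤ) ≤ p := by exact_mod_cast hp
      omega)
    (by
      have h1 : (p:ℤ) < q := by exact_mod_cast hpq
      omega)
  obtain ⟨t0, _, _, ht0⟩ := us_surj (p := p) hG.hq hcop ((q:ℤ) - 1)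
    (by
      have h1 : (1:ℤ) ≤ q := by exact_mod_cast hq0
      omega)
    (by omega)
  have hpZ : (1:ℤ) ≤ p := by exact_mod_cast hp
  have hpqZ : (p:ℤ) < q := by exact_mod_cast hpq
  have hTδ : us p q (T + δ) = (p:ℤ) := by
    rw [us_add' hG, hT, hδ, show (p:ℤ) - 1 + 1 = p from by ring]
    exact Int.emod_eq_of_lt (by omega) hpqZ
  -- the flip time
  set l : ℤ := (T - t0) % q with hl
  have hqZ0 : (q:ℤ) ≠ 0 := by exact_mod_cast hq0.ne'
  have hl0 : 0 ≤ l := Int.emod_nonneg _ hqZ0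
  have hlq : l < q := Int.emod_lt_of_pos _ (by exact_mod_cast hq0)
  have hdvdTl : (q:ℤ) ∣ (T - l) - t0 := by
    refine ⟨(T - t0)/q, ?_⟩
    have := Int.mul_ediv_add_emod (T - t0) (q:ℤ)
    omega
  have hust : us p q (T - l) = (q:ℤ) - 1 := by rw [us_congr hG hdvdTl, ht0]
  have hl1 : 1 ≤ l := by
    rcases eq_or_lt_of_le hl0 with h0 | h0
    · exfalso
      have he : us p q T = us p q (T - l) := by rw [← h0, sub_zero]
      rw [hT, hust] at he
      have : (p:ℤ) = q := by omega
      omega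
    · omega
  -- the gap
  have hcast : ((l-1).toNat : ℤ) = l - 1 := Int.toNat_of_nonneg (by omega)
  have hconds : ∀ j' : ℕ, j' < (l-1).toNat →
      us p q ((T - l) + 1 + j') ≠ (q:ℤ) - 1 ∧ us p q ((T - l) + 1 + j') ≠ (p:ℤ) - 1 := by
    intro j' hj'
    have hj'' : (j' : ℤ) < l - 1 := by omega
    have hj0 : (0:ℤ) ≤ j' := by positivity
    constructor
    · intro hbad
      have he : us p q ((T - l) + 1 + j') = us p q (T - l) := by rw [hbad, hust]
      have hdvd := us_inj hG.hq hcop he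
      have : ((T - l) + 1 + j') - (T - l) = 1 + j' := by ring
      rw [this] at hdvd
      have := Int.eq_zero_of_abs_lt_dvd hdvd (by rw [abs_lt]; omega)
      omega
    · intro hbad
      have he : us p q ((T - l) + 1 + j') = us p q T := by rw [hbad, hT]
      have hdvd := us_inj hG.hq hcop he
      have : ((T - l) + 1 + j') - T = 1 + j' - l := by ring
      rw [this] at hdvd
      have := Int.eq_zero_of_abs_lt_dvd hdvd (by rw [abs_lt]; omega)
      omega
  have hchain := gap_chain hG δ hδ (T - l) hust (l-1).toNat hconds
  rw [hcast, show T - l + 1 + (l - 1) = T from by ring] at hchain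
  have hg0 : 0 < r*m/2 - η^((p:ℤ) - q - 1) := by linarith [hG.hN3]
  have hgap : 0 < vI r m p q η T - vI r m p q η (T + δ) := by
    have hpow : (0:ℝ) < (r*m/2)^((l-1).toNat) := by positivity
    calc (0:ℝ) < (r*m/2)^((l-1).toNat) * (r*m/2 - η^((p:ℤ) - q - 1)) := mul_pos hpow hg0
    _ ≤ _ := hchain
  -- the window
  have hwgap : wI r m p q η (T+δ) ≤ wI r m p q η T :=
    phiL_J1 hG T (T+δ) 2 (by rw [hT, hTδ]; omega)
  have hm2 : (0:ℝ) ≤ m/2 := by linarith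
  have h1m : (0:ℝ) < 1 - m := by linarith
  have hvT0 : 0 ≤ vI r m p q η T := (phiL_pos hG T _).le
  have hwT0 : 0 ≤ wI r m p q η T := (phiL_pos hG T _).le
  have hcc : cminW r m p q η T δ < cmaxW r m p q η T := by
    apply max_lt
    · rw [cmaxW]
      nlinarith [mul_pos h1m hgap, mul_le_mul_of_nonneg_left hwgap hm2]
    · have h1 : η^((p:ℤ) - q - 1)/r < m/2 := by
        rw [div_lt_iff₀ hr0]
        nlinarith [hG.hN3]
      rw [cmaxW]
      nlinarith [mul_nonneg h1m.le hvT0, mul_nonneg hm2 hwT0]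
  have hcmin0 : 0 < cminW r m p q η T δ := by
    have : (0:ℝ) < η^((p:ℤ) - q - 1)/r := by
      apply div_pos (zpow_pos hG.heta0 _) hr0
    exact lt_of_lt_of_le this (le_max_right _ _)
  refine ⟨cminW r m p q η T δ, cmaxW r m p q η T, hcmin0, hcc, ?_⟩
  intro c hc1 hc2
  refine ⟨phiL r m p q η 0, ?_, ?_, ?_, ?_⟩
  · intro i hi
    apply phiL_plateau hG
    rw [kk_zero]; exact hi
  · intro i; exact phiL_pos hG 0 i
  · -- decay at +∞
    have hx0 : (0:ℝ) ≤ η^(-(q:ℤ)) := (zpow_pos hG.heta0 _).le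
    have hx1 : η^(-(q:ℤ)) < 1 := by
      have h1 : η^(-(q:ℤ)) < η^(0:ℤ) := by
        apply zpow_lt_zpow_right₀ hG.heta1
        omega
      simpa using h1
    have htendzpow : Tendsto (fun n : ℤ => (η^(-(q:ℤ))) ^ n) atTop (nhds 0) := by
      have h1 : Tendsto (fun k : ℕ => (η^(-(q:ℤ))) ^ k) atTop (nhds 0) :=
        tendsto_pow_atTop_nhds_zero_of_lt_one hx0 hx1
      have h2 : Tendsto Int.toNat atTop atTop :=
        Filter.tendsto_atTop_atTop.2 fun b => ⟨(b:ℤ), fun a ha => by omega⟩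
      apply (h1.comp h2).congr'
      filter_upwards [Filter.eventually_ge_atTop (0:ℤ)] with n hn
      simp only [Function.comp]
      rw [← zpow_natCast, Int.toNat_of_nonneg hn]
    have htend : Tendsto (fun i : ℤ => η^((q:ℤ)-1) * (η^(-(q:ℤ)))^i) atTop (nhds 0) := by
      have := htendzpow.const_mul (η^((q:ℤ)-1))
      simpa using this
    apply tendsto_of_tendsto_of_tendsto_of_le_of_le' tendsto_const_nhds htend
    · filter_upwards with i
      exact (phiL_pos hG 0 i).le
    · filter_upwards [Filter.eventually_ge_atTop (1:ℤ)] with i hi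
      have hb := phiL_le_Upp hG 0 i
      rw [Upp, if_neg (by rw [kk_zero]; omega)] at hb
      refine le_trans hb (le_of_eq ?_)
      rw [← zpow_mul, ← zpow_add₀ hG.heta0']
      congr 1
      ring
  · -- the traveling-wave property
    intro i
    have hstep : ∀ s : ℤ, G r c m (phiL r m p q η s) = phiL r m p q η (s+1) :=
      fun s => funext (fun j => G_step hG T δ hT hTδ c hc1 hc2 s j)
    have hiter : ∀ n : ℕ, (G r c m)^[n] (phiL r m p q η 0) = phiL r m p q η n := by
      intro n
      induction n with
      | zero => simp
      | succ n ih =>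
        rw [Function.iterate_succ_apply', ih, hstep n]
        congr 1
    rw [hiter q]
    have hper := phiL_period hG 0 i
    rw [zero_add] at hper
    rw [hper]
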